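/- If G is a finite group and every composition factor of G has an ordered generating system, then G has an ordered generating system. -/

import Mathlib

/-- `(a, m)` is an *ordered generating system* of the group `G` if every `m k` is positive
and every `g : G` has a unique representation `g = a 0 ^ i 0 * a 1 ^ i 1 * ⋯ * a (n-1) ^ i (n-1)`
with `0 ≤ i k < m k` for all `k`. -/
def IsOGS {G : Type*} [Group G] {n : ℕ} (a : Fin n → G) (m : Fin n → ℕ) : Prop :=
  (∀ k, 0 < m k) ∧
    ∀ g : G, ∃! i : (k : Fin n) → Fin (m k),
      g = (List.ofFn fun k => a k ^ ((i k : ℕ))).prod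

/-- A group `G` has an ordered generating system if some tuple of elements together with
some bounds forms one. -/
def HasOGS (G : Type*) [Group G] : Prop :=
  ∃ (n : ℕ) (a : Fin n → G) (m : Fin n → ℕ), IsOGS a m

/-- The product map of an OGS candidate. -/
def ogsProd {G : Type*} [Group G] {n : ℕ} (a : Fin n → G) (m : Fin n → ℕ)
    (i : (k : Fin n) → Fin (m k)) : G :=
  (List.ofFn fun k => a k ^ ((i k : ℕ))).prod

lemma isOGS_iff_bijective {G : Type*} [Group G] {n : ℕ} (a : Fin n → G) (m : Fin n → ℕ) :
    IsOGS a m ↔ (∀ k, 0 < m k) ∧ Function.Bijective (ogsProd a m) := by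
  unfold IsOGS ogsProd
  rw [Function.bijective_iff_existsUnique]
  exact and_congr_right fun _ => forall_congr' fun g => existsUnique_congr fun i => eq_comm

lemma map_ogsProd {G H : Type*} [Group G] [Group H] (f : G →* H) {n : ℕ}
    (a : Fin n → G) (m : Fin n → ℕ) (i : (k : Fin n) → Fin (m k)) :
    f (ogsProd a m i) = ogsProd (fun k => f (a k)) m i := by
  unfold ogsProd
  rw [map_list_prod, List.map_ofFn]
  simp [Function.comp_def]

lemma hasOGS_of_mulEquiv {G H : Type*} [Group G] [Group H] (e : G ≃* H) (hG : HasOGS G) :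
    HasOGS H := by
  obtain ⟨n, a, m, hme⟩ := hG
  rw [isOGS_iff_bijective] at hme
  refine ⟨n, fun k => e (a k), m, (isOGS_iff_bijective _ _).2 ⟨hme.1, ?_⟩⟩
  have : ogsProd (fun k => e (a k)) m = fun i => e (ogsProd a m i) := by
    funext i; exact (map_ogsProd e.toMonoidHom a m i).symm
  rw [this]
  exact e.bijective.comp hme.2

lemma hasOGS_of_subsingleton (G : Type*) [Group G] [Subsingleton G] : HasOGS G := by
  refine ⟨0, fun k => 1, fun k => 1, fun k => one_pos, fun g => ⟨fun k => k.elim0, ?_, ?_⟩⟩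
  · exact Subsingleton.elim _ _
  · intro i _; funext k; exact k.elim0
/-- Splitting a dependent tuple of `Fin`s indexed by `Fin (n1 + n2)` with `Fin.append`ed bounds. -/
def finAppendEquiv {n1 n2 : ℕ} (m1 : Fin n1 → ℕ) (m2 : Fin n2 → ℕ) :
    ((k : Fin (n1 + n2)) → Fin (Fin.append m1 m2 k)) ≃
      ((j : Fin n1) → Fin (m1 j)) × ((j : Fin n2) → Fin (m2 j)) where
  toFun i :=
    (fun j => (i (Fin.castAdd n2 j)).cast (Fin.append_left m1 m2 j),
     fun j => (i (Fin.natAdd n1 j)).cast (Fin.append_right m1 m2 j))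
  invFun p k :=
    Fin.addCases (motive := fun k => Fin (Fin.append m1 m2 k))
      (fun j => (p.1 j).cast (Fin.append_left m1 m2 j).symm)
      (fun j => (p.2 j).cast (Fin.append_right m1 m2 j).symm) k
  left_inv i := by
    funext k
    refine Fin.addCases (fun j => ?_) (fun j => ?_) k <;> dsimp only []
    · rw [Fin.addCases_left]; ext; simp
    · rw [Fin.addCases_right]; ext; simp
  right_inv p := by
    refine Prod.ext (funext fun j => ?_) (funext fun j => ?_) <;> dsimp only []
    · rw [Fin.addCases_left]; ext; simp
    · rw [Fin.addCases_right]; ext; simp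

lemma ogsProd_append {G : Type*} [Group G] {n1 n2 : ℕ}
    (a1 : Fin n1 → G) (a2 : Fin n2 → G) (m1 : Fin n1 → ℕ) (m2 : Fin n2 → ℕ)
    (i : (k : Fin (n1 + n2)) → Fin (Fin.append m1 m2 k)) :
    ogsProd (Fin.append a1 a2) (Fin.append m1 m2) i =
      ogsProd a1 m1 (finAppendEquiv m1 m2 i).1 * ogsProd a2 m2 (finAppendEquiv m1 m2 i).2 := by
  unfold ogsProd
  rw [List.ofFn_add, List.prod_append]
  have h1 : (fun j : Fin n1 => Fin.append a1 a2 (Fin.castAdd n2 j) ^ ((i (Fin.castAdd n2 j) : ℕ)))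
      = fun j => a1 j ^ (((finAppendEquiv m1 m2 i).1 j : ℕ)) := by
    funext j; simp [finAppendEquiv, Fin.append_left]
  have h2 : (fun j : Fin n2 => Fin.append a1 a2 (Fin.natAdd n1 j) ^ ((i (Fin.natAdd n1 j) : ℕ)))
      = fun j => a2 j ^ (((finAppendEquiv m1 m2 i).2 j : ℕ)) := by
    funext j; simp [finAppendEquiv, Fin.append_right]
  exact congrArg₂ (· * ·) (congrArg (fun f => (List.ofFn f).prod) h1)
    (congrArg (fun f => (List.ofFn f).prod) h2)
lemma hasOGS_of_normal {K : Type*} [Group K] (N : Subgroup K) [N.Normal]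
    (h1 : HasOGS N) (h2 : HasOGS (K ⧸ N)) : HasOGS K := by
  obtain ⟨n1, b, m1, hb⟩ := h2
  obtain ⟨n2, a, m2, ha⟩ := h1
  rw [isOGS_iff_bijective] at hb ha
  classical
  set π : K →* K ⧸ N := QuotientGroup.mk' N with hπ
  set c : Fin n1 → K := fun j => (b j).out with hc
  have hcb : ∀ j, π (c j) = b j := fun j => QuotientGroup.out_eq' (b j)
  set a' : Fin n2 → K := fun k => ((a k : N) : K) with ha'
  refine ⟨n1 + n2, Fin.append c a', Fin.append m1 m2, (isOGS_iff_bijective _ _).2 ⟨?_, ?_, ?_⟩⟩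
  · intro k
    refine Fin.addCases (fun j => ?_) (fun j => ?_) k
    · simpa [Fin.append_left] using hb.1 j
    · simpa [Fin.append_right] using ha.1 j
  -- key computation lemmas
  all_goals
    have key : ∀ i, ogsProd (Fin.append c a') (Fin.append m1 m2) i =
        ogsProd c m1 ((finAppendEquiv m1 m2) i).1 *
          N.subtype (ogsProd a m2 ((finAppendEquiv m1 m2) i).2) := by
      intro i
      rw [ogsProd_append, map_ogsProd]
      rfl
    have keyπ : ∀ i, π (ogsProd (Fin.append c a') (Fin.append m1 m2) i) =
        ogsProd b m1 ((finAppendEquiv m1 m2) i).1 := by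
      intro i
      have h2 : π (N.subtype (ogsProd a m2 ((finAppendEquiv m1 m2) i).2)) = 1 :=
        (QuotientGroup.eq_one_iff _).2 (SetLike.coe_mem _)
      have h3 : (fun j => π (c j)) = b := funext hcb
      rw [key, map_mul, h2, mul_one, map_ogsProd, h3]
  · -- injective
    intro i i' hii
    have h1' : ogsProd b m1 ((finAppendEquiv m1 m2) i).1
        = ogsProd b m1 ((finAppendEquiv m1 m2) i').1 := by
      rw [← keyπ, ← keyπ, hii]
    have e1 : ((finAppendEquiv m1 m2) i).1 = ((finAppendEquiv m1 m2) i').1 :=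
      hb.2.injective h1'
    rw [key, key, e1] at hii
    have e2 : ((finAppendEquiv m1 m2) i).2 = ((finAppendEquiv m1 m2) i').2 :=
      ha.2.injective (N.subtype_injective (mul_left_cancel hii))
    exact (finAppendEquiv m1 m2).injective (Prod.ext e1 e2)
  · -- surjective
    intro g
    obtain ⟨p1, hp1⟩ := hb.2.surjective (π g)
    have hmem : (ogsProd c m1 p1)⁻¹ * g ∈ N := by
      have : π (ogsProd c m1 p1) = π g := by
        rw [map_ogsProd]
        simpa [hcb] using hp1
      rw [hπ] at this
      simp only [QuotientGroup.mk'_apply] at this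
      exact QuotientGroup.eq.1 this
    obtain ⟨p2, hp2⟩ := ha.2.surjective ⟨_, hmem⟩
    refine ⟨(finAppendEquiv m1 m2).symm (p1, p2), ?_⟩
    rw [key, (finAppendEquiv m1 m2).apply_symm_apply, hp2]
    simp
lemma isSimpleGroup_quotient_of_maximal {G : Type*} [Group G] (M : Subgroup G) [M.Normal]
    (hne : M ≠ ⊤) (hmax : ∀ H : Subgroup G, H.Normal → H ≠ ⊤ → M ≤ H → M = H) :
    IsSimpleGroup (G ⧸ M) := by
  have hnt : Nontrivial (G ⧸ M) := by
    obtain ⟨g, hg⟩ : ∃ g : G, g ∉ M := by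
      by_contra hcon
      push_neg at hcon
      exact hne (Subgroup.eq_top_iff' M |>.2 hcon)
    exact ⟨⟨(g : G ⧸ M), 1, fun hh => hg ((QuotientGroup.eq_one_iff g).1 hh)⟩⟩
  refine ⟨fun H hH => ?_⟩
  set K := H.comap (QuotientGroup.mk' M) with hK
  have hKn : K.Normal := hH.comap _
  have hMK : M ≤ K := by
    intro x hx
    show QuotientGroup.mk' M x ∈ H
    have : QuotientGroup.mk' M x = 1 := (QuotientGroup.eq_one_iff x).2 hx
    rw [this]; exact H.one_mem
  by_cases hKtop : K = ⊤
  · right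
    rw [← Subgroup.map_comap_eq_self_of_surjective (QuotientGroup.mk'_surjective M) H, ← hK,
      hKtop]
    exact Subgroup.map_top_of_surjective _ (QuotientGroup.mk'_surjective M)
  · left
    have : M = K := hmax K hKn hKtop hMK
    rw [← Subgroup.map_comap_eq_self_of_surjective (QuotientGroup.mk'_surjective M) H, ← hK]
    rw [Subgroup.map_eq_bot_iff, QuotientGroup.ker_mk']
    exact this.ge
lemma isSimpleGroup_of_mulEquiv {G H : Type*} [Group G] [Group H] (e : G ≃* H)
    (hG : IsSimpleGroup G) : IsSimpleGroup H := by
  haveI := hG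
  haveI : Nontrivial H := e.symm.toEquiv.nontrivial
  exact IsSimpleGroup.isSimpleGroup_of_surjective e.toMonoidHom e.surjective

lemma subgroupOf_map_eq {G H : Type*} [Group G] [Group H] (f : G →* H)
    (hf : Function.Injective f) {A B : Subgroup G} (hAB : A ≤ B) :
    (A.subgroupOf B).map (B.equivMapOfInjective f hf : ↥B →* ↥(B.map f))
      = (A.map f).subgroupOf (B.map f) := by
  ext x
  simp only [Subgroup.mem_map, Subgroup.mem_subgroupOf]
  constructor
  · rintro ⟨y, hy, rfl⟩
    refine ⟨(y : G), hy, ?_⟩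
    exact (Subgroup.coe_equivMapOfInjective_apply B f hf y).symm
  · rintro ⟨a, ha, hfa⟩
    refine ⟨⟨a, hAB ha⟩, ha, ?_⟩
    apply Subtype.ext
    show ((B.equivMapOfInjective f hf) ⟨a, hAB ha⟩ : H) = (x : H)
    rw [Subgroup.coe_equivMapOfInjective_apply]
    exact hfa

lemma factor_transfer {G H : Type*} [Group G] [Group H] (f : G →* H)
    (hf : Function.Injective f) {A B : Subgroup G} (hAB : A ≤ B)
    (hN : (A.subgroupOf B).Normal) :
    ∃ _ : ((A.map f).subgroupOf (B.map f)).Normal,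
      Nonempty ((B.map f ⧸ (A.map f).subgroupOf (B.map f)) ≃* (B ⧸ A.subgroupOf B)) := by
  haveI := hN
  set e := B.equivMapOfInjective f hf with he
  have hmap := subgroupOf_map_eq f hf hAB
  have hN' : ((A.map f).subgroupOf (B.map f)).Normal := by
    rw [← hmap]
    exact hN.map (e : ↥B →* ↥(B.map f)) e.surjective
  refine ⟨hN', ⟨?_⟩⟩
  haveI := hN'
  exact (QuotientGroup.congr (A.subgroupOf B) ((A.map f).subgroupOf (B.map f)) e hmap).symm

lemma top_factor {G : Type*} [Group G] (N : Subgroup G) [hN : N.Normal] :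
    ∃ _ : (N.subgroupOf (⊤ : Subgroup G)).Normal,
      Nonempty (((⊤ : Subgroup G) ⧸ N.subgroupOf (⊤ : Subgroup G)) ≃* (G ⧸ N)) := by
  refine ⟨Subgroup.normal_subgroupOf, ⟨?_⟩⟩
  refine QuotientGroup.congr (N.subgroupOf ⊤) N Subgroup.topEquiv ?_
  ext x
  simp only [Subgroup.mem_map, Subgroup.mem_subgroupOf]
  constructor
  · rintro ⟨y, hy, rfl⟩
    exact hy
  · intro hx
    exact ⟨⟨x, trivial⟩, hx, rfl⟩
universe u

lemma exists_composition_chain :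
    ∀ (c : ℕ) (G : Type u) [Group G] [Fintype G], Fintype.card G ≤ c →
    ∃ (n : ℕ) (S : Fin (n + 1) → Subgroup G),
      S 0 = ⊥ ∧ S (Fin.last n) = ⊤ ∧ (∀ i : Fin n, S i.castSucc ≤ S i.succ) ∧
      ∀ i : Fin n, ∃ _ : ((S i.castSucc).subgroupOf (S i.succ)).Normal,
        IsSimpleGroup (S i.succ ⧸ (S i.castSucc).subgroupOf (S i.succ)) := by
  intro c
  induction c with
  | zero =>
    intro G _ _ hc
    have := Fintype.card_pos (α := G)
    omega
  | succ c ih =>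
    intro G _ _ hc
    rcases subsingleton_or_nontrivial G with hss | hnt
    · refine ⟨0, fun _ => ⊥, rfl, ?_, fun i => i.elim0, fun i => i.elim0⟩
      ext x
      simp [Subsingleton.elim x 1]
    · have hbot : (⊥ : Subgroup G) ≠ ⊤ := by
        intro hbt
        obtain ⟨x, hx⟩ := exists_ne (1 : G)
        have : x ∈ (⊥ : Subgroup G) := hbt ▸ Subgroup.mem_top x
        exact hx (Subgroup.mem_bot.1 this)
      haveI : Finite (Subgroup G) :=
        Finite.of_injective (fun H => (H : Set G)) SetLike.coe_injective
      obtain ⟨M, hMs, hMmax⟩ := Set.Finite.exists_maximalFor id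
        {H : Subgroup G | H.Normal ∧ H ≠ ⊤} (Set.toFinite _)
        ⟨⊥, ⟨inferInstance, hbot⟩⟩
      haveI hMn : M.Normal := hMs.1
      have hMne : M ≠ ⊤ := hMs.2
      have hsimple : IsSimpleGroup (G ⧸ M) :=
        isSimpleGroup_quotient_of_maximal M hMne
          (fun H hn hne hle => le_antisymm hle (hMmax (j := H) ⟨hn, hne⟩ hle))
      haveI : Fintype M := Fintype.ofFinite _
      have hcard : Fintype.card M < Fintype.card G := by
        obtain ⟨g, hg⟩ : ∃ g, g ∉ M := by
          by_contra hcon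
          push_neg at hcon
          exact hMne ((Subgroup.eq_top_iff' M).2 hcon)
        exact Fintype.card_lt_of_injective_of_notMem _ Subtype.coe_injective
          (by simpa using hg)
      obtain ⟨n, T, hT0, hTlast, hTmono, hTfac⟩ := ih M (by omega)
      have hmaptop : Subgroup.map M.subtype ⊤ = M := by
        rw [← MonoidHom.range_eq_map, Subgroup.range_subtype]
      refine ⟨n + 1, Fin.snoc (fun i => (T i).map M.subtype) ⊤, ?_, ?_, ?_, ?_⟩
      · have h0 : (0 : Fin (n + 1 + 1)) = Fin.castSucc 0 := rfl
        rw [h0, Fin.snoc_castSucc, hT0, Subgroup.map_bot]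
      · rw [Fin.snoc_last]
      · intro i
        refine Fin.lastCases ?_ (fun j => ?_) i
        · rw [Fin.succ_last, Fin.snoc_last]
          exact le_top
        · rw [Fin.snoc_castSucc, Fin.succ_castSucc, Fin.snoc_castSucc]
          exact Subgroup.map_mono (hTmono j)
      · intro i
        refine Fin.lastCases ?_ (fun j => ?_) i
        · rw [Fin.succ_last, Fin.snoc_last, Fin.snoc_castSucc, hTlast, hmaptop]
          obtain ⟨hn', ⟨e⟩⟩ := top_factor M
          exact ⟨hn', isSimpleGroup_of_mulEquiv e.symm hsimple⟩
        · rw [Fin.snoc_castSucc, Fin.succ_castSucc, Fin.snoc_castSucc]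
          obtain ⟨hn1, hs1⟩ := hTfac j
          obtain ⟨hn2, ⟨e⟩⟩ :=
            factor_transfer M.subtype (Subgroup.subtype_injective M) (hTmono j) hn1
          exact ⟨hn2, isSimpleGroup_of_mulEquiv e.symm hs1⟩
theorem hasOGS_of_composition_factors {G : Type*} [Group G] [Fintype G]
    (h : ∀ (n : ℕ) (S : Fin (n + 1) → Subgroup G),
      S 0 = ⊥ → S (Fin.last n) = ⊤ →
      (∀ i : Fin n, S i.castSucc ≤ S i.succ) →
      ∀ hN : ∀ i : Fin n, ((S i.castSucc).subgroupOf (S i.succ)).Normal,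
      (∀ i : Fin n, letI := hN i;
        IsSimpleGroup (S i.succ ⧸ (S i.castSucc).subgroupOf (S i.succ))) →
      ∀ i : Fin n, letI := hN i;
        HasOGS (S i.succ ⧸ (S i.castSucc).subgroupOf (S i.succ))) :
    HasOGS G := by
  obtain ⟨n, S, hS0, hSlast, hle, hfac⟩ :=
    exists_composition_chain (Fintype.card G) G le_rfl
  have hN : ∀ i : Fin n, ((S i.castSucc).subgroupOf (S i.succ)).Normal :=
    fun i => (hfac i).choose
  have hsimple : ∀ i : Fin n, letI := hN i;
      IsSimpleGroup (S i.succ ⧸ (S i.castSucc).subgroupOf (S i.succ)) :=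
    fun i => (hfac i).choose_spec
  have hOGS := h n S hS0 hSlast hle hN hsimple
  have main : ∀ i : Fin (n + 1), HasOGS (S i) := by
    intro i
    induction i using Fin.induction with
    | zero =>
      rw [hS0]
      exact hasOGS_of_subsingleton _
    | succ j ihj =>
      haveI := hN j
      refine hasOGS_of_normal ((S j.castSucc).subgroupOf (S j.succ)) ?_ (hOGS j)
      exact hasOGS_of_mulEquiv (Subgroup.subgroupOfEquivOfLe (hle j)).symm ihj
  have htop := main (Fin.last n)
  rw [hSlast] at htop
  exact hasOGS_of_mulEquiv Subgroup.topEquiv htop
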